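/- Let W : ℝ² → ℝ be twice continuously differentiable, suppose the set D = {v : W(v) < 0} is bounded, and suppose ∇W(v) ≠ 0 at every point v with W(v) = 0. Then ∫_D ΔW(v) dv ≥ 0; equivalently, the imaginary part of the complex Fisher information J_i(W) = −π ∫_D ΔW(v) dv is nonpositive. -/

import Mathlib

open MeasureTheory

/-- The Laplacian of a function on the phase plane. -/
noncomputable def lap (W : EuclideanSpace ℝ (Fin 2) → ℝ)
    (v : EuclideanSpace ℝ (Fin 2)) : ℝ :=
  ∑ i : Fin 2,
    fderiv ℝ (fun u => fderiv ℝ W u (EuclideanSpace.single i 1)) v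
      (EuclideanSpace.single i 1)

section Aux
open Real Filter

open Real Filter in

lemma deriv_nonneg_of_monotone {f : ℝ → ℝ} (hm : Monotone f) {d x : ℝ}
    (h : HasDerivAt f d x) : 0 ≤ d := by
  have ht := hasDerivAt_iff_tendsto_slope.1 h
  refine ge_of_tendsto ht ?_
  filter_upwards [self_mem_nhdsWithin] with y hy
  have hy' : y ≠ x := hy
  rcases lt_or_gt_of_ne hy' with h' | h'
  · rw [slope_def_field]
    have h1 : f y - f x ≤ 0 := by simpa using hm h'.le
    have h2 : y - x < 0 := by linarith
    rw [div_nonneg_iff]; right; exact ⟨h1, h2.le⟩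
  · rw [slope_def_field]
    exact div_nonneg (by simpa using hm h'.le) (by linarith)

lemma expNegInvGlue_monotone : Monotone expNegInvGlue := by
  intro x y hxy
  rcases le_or_gt x 0 with hx | hx
  · rw [expNegInvGlue.zero_of_nonpos hx]; exact expNegInvGlue.nonneg y
  · have hy : 0 < y := hx.trans_le hxy
    rw [expNegInvGlue, expNegInvGlue, if_neg hx.not_ge, if_neg hy.not_ge]
    refine Real.exp_le_exp.2 ?_
    have h := one_div_le_one_div_of_le hx hxy
    rw [neg_le_neg_iff, inv_eq_one_div, inv_eq_one_div]
    exact h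

lemma smoothTransition_monotone : Monotone Real.smoothTransition := by
  intro x y hxy
  unfold Real.smoothTransition
  rw [div_le_div_iff₀ (Real.smoothTransition.pos_denom x) (Real.smoothTransition.pos_denom y)]
  have h1 : expNegInvGlue x ≤ expNegInvGlue y := expNegInvGlue_monotone hxy
  have h2 : expNegInvGlue (1 - y) ≤ expNegInvGlue (1 - x) :=
    expNegInvGlue_monotone (by linarith)
  nlinarith [expNegInvGlue.nonneg x, expNegInvGlue.nonneg y,
    expNegInvGlue.nonneg (1 - x), expNegInvGlue.nonneg (1 - y)]

section core
variable (V : (Fin 2 → ℝ) → ℝ)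

noncomputable def gg (i : Fin 2) : (Fin 2 → ℝ) → ℝ :=
  fun u => fderiv ℝ V u (Pi.single i 1)

noncomputable def lapG : (Fin 2 → ℝ) → ℝ :=
  fun x => ∑ i : Fin 2, fderiv ℝ (gg V i) x (Pi.single i 1)

variable {V}

lemma gg_contDiff (hV : ContDiff ℝ 2 V) (i : Fin 2) : ContDiff ℝ 1 (gg V i) := by
  exact (ContinuousLinearMap.apply ℝ ℝ (Pi.single i 1 : Fin 2 → ℝ)).contDiff.comp
    (hV.fderiv_right (by norm_num))

lemma lapG_continuous (hV : ContDiff ℝ 2 V) : Continuous (lapG V) := by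
  refine continuous_finset_sum _ fun i _ => ?_
  exact ((gg_contDiff hV i).continuous_fderiv (by norm_num)).clm_apply continuous_const
end core

section step
variable {V : (Fin 2 → ℝ) → ℝ}

lemma step_n (hV : ContDiff ℝ 2 V) (hbdd : Bornology.IsBounded {x | V x < 0}) (n : ℕ) :
    0 ≤ ∫ x, smoothTransition (-(n : ℝ) * V x) * lapG V x := by
  obtain ⟨R, hR0, hRsub⟩ := hbdd.subset_ball_lt 0 0
  set φ : ℝ → ℝ := fun t => smoothTransition (-(n : ℝ) * t) with hφdef
  set dφ : ℝ → ℝ := fun t => deriv smoothTransition (-(n : ℝ) * t) * (-(n : ℝ)) with hdφdef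
  have hφder : ∀ t, HasDerivAt φ (dφ t) t := by
    intro t
    have h1 : HasDerivAt (fun t : ℝ => -(n : ℝ) * t) (-(n : ℝ)) t := by
      simpa using (hasDerivAt_id t).const_mul (-(n : ℝ))
    have h2 : HasDerivAt smoothTransition (deriv smoothTransition (-(n : ℝ) * t))
        (-(n : ℝ) * t) :=
      (((smoothTransition.contDiff (n := 1)).differentiable (by norm_num)) _).hasDerivAt
    exact h2.comp t h1
  have hdφ_nonpos : ∀ t, dφ t ≤ 0 := by
    intro t
    have h2 : HasDerivAt smoothTransition (deriv smoothTransition (-(n : ℝ) * t))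
        (-(n : ℝ) * t) :=
      (((smoothTransition.contDiff (n := 1)).differentiable (by norm_num)) _).hasDerivAt
    have := deriv_nonneg_of_monotone smoothTransition_monotone h2
    exact mul_nonpos_of_nonneg_of_nonpos this (by simp)
  have hVd : Differentiable ℝ V := hV.differentiable (by norm_num)
  -- vanishing of φ ∘ V outside the ball
  have hφ0 : ∀ y : Fin 2 → ℝ, ¬ (‖y‖ < R) → φ (V y) = 0 := by
    intro y hy
    have : ¬ V y < 0 := fun h => hy (by simpa using hRsub h)
    exact smoothTransition.zero_of_nonpos (by nlinarith [not_lt.1 this])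
  set F : Fin 2 → (Fin 2 → ℝ) → ℝ := fun i x => φ (V x) * gg V i x with hFdef
  set F' : Fin 2 → (Fin 2 → ℝ) → (Fin 2 → ℝ) →L[ℝ] ℝ := fun i x =>
    φ (V x) • fderiv ℝ (gg V i) x + gg V i x • (dφ (V x) • fderiv ℝ V x) with hF'def
  have hF : ∀ (x : Fin 2 → ℝ) (i : Fin 2), HasFDerivAt (F i) (F' i x) x := by
    intro x i
    have hc : HasFDerivAt (fun y => φ (V y)) (dφ (V x) • fderiv ℝ V x) x :=
      (hφder (V x)).comp_hasFDerivAt x (hVd x).hasFDerivAt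
    have hd : HasFDerivAt (gg V i) (fderiv ℝ (gg V i) x) x :=
      ((gg_contDiff hV i).differentiable (by norm_num) x).hasFDerivAt
    exact hc.mul hd
  have hdiv : ∀ x : Fin 2 → ℝ, (∑ i : Fin 2, F' i x (Pi.single i 1)) =
      φ (V x) * lapG V x + dφ (V x) * ∑ i : Fin 2, (gg V i x) ^ 2 := by
    intro x
    rw [lapG, Finset.mul_sum, Finset.mul_sum, ← Finset.sum_add_distrib]
    refine Finset.sum_congr rfl fun i _ => ?_
    have hgi : (fderiv ℝ V x) (Pi.single i 1) = gg V i x := rfl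
    simp only [hF'def, ContinuousLinearMap.add_apply, ContinuousLinearMap.coe_smul',
      Pi.smul_apply, smul_eq_mul, hgi]
    ring
  -- continuity facts
  have hφVc : Continuous fun x => φ (V x) :=
    Real.smoothTransition.continuous.comp (continuous_const.mul hV.continuous)
  have hdφVc : Continuous fun x => dφ (V x) :=
    (((smoothTransition.contDiff (n := 2)).continuous_deriv (by norm_num)).comp
      (continuous_const.mul hV.continuous)).mul continuous_const
  have hlapc : Continuous (lapG V) := lapG_continuous hV
  have hggc : ∀ i, Continuous (gg V i) := fun i => (gg_contDiff hV i).continuous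
  set aa : Fin 2 → ℝ := fun _ => -R with haa
  set bb : Fin 2 → ℝ := fun _ => R with hbb
  have hle : aa ≤ bb := fun i => by simp [haa, hbb]; linarith
  have hI1 : IntegrableOn (fun x => φ (V x) * lapG V x) (Set.Icc aa bb) :=
    ((hφVc.mul hlapc).continuousOn).integrableOn_compact isCompact_Icc
  have hI2 : IntegrableOn (fun x => dφ (V x) * ∑ i : Fin 2, (gg V i x) ^ 2)
      (Set.Icc aa bb) :=
    ((hdφVc.mul (continuous_finset_sum _ fun i _ => (hggc i).pow 2)).continuousOn
      ).integrableOn_compact isCompact_Icc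
  have hdivfun : (fun x => ∑ i : Fin 2, F' i x (Pi.single i 1)) =
      fun x => φ (V x) * lapG V x + dφ (V x) * ∑ i : Fin 2, (gg V i x) ^ 2 :=
    funext hdiv
  have key := MeasureTheory.integral_divergence_of_hasFDerivAt_off_countable'
    (n := 1) aa bb hle F F' ∅ Set.countable_empty
    (fun i => ((hφVc.mul (hggc i)).continuousOn))
    (fun x _ i => hF x i) (by rw [hdivfun]; exact hI1.add hI2)
  rw [hdivfun] at key
  -- faces vanish
  have hface : ∀ (i : Fin 2) (c : ℝ), |c| = R →
      ∀ x : Fin 1 → ℝ, F i (Fin.insertNth (α := fun _ => ℝ) i c x) = 0 := by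
    intro i c hc x
    set y : Fin 2 → ℝ := Fin.insertNth (α := fun _ => ℝ) i c x with hy
    have hyi : y i = c := by simp [hy]
    have hnorm : ¬ ‖y‖ < R := by
      intro h
      have h1 := norm_le_pi_norm y i
      rw [hyi, Real.norm_eq_abs, hc] at h1
      linarith
    show φ (V y) * gg V i y = 0
    rw [hφ0 _ hnorm, zero_mul]
  have hbbR : |bb (0:Fin 2)| = R := by simp [hbb]; linarith
  have haaR : ∀ i : Fin 2, |aa i| = R := fun i => by simp [haa]; linarith
  have hbbR' : ∀ i : Fin 2, |bb i| = R := fun i => by simp [hbb]; linarith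
  rw [Finset.sum_eq_zero (fun i _ => by
    simp only [hface i (bb i) (hbbR' i), hface i (aa i) (haaR i), integral_zero,
      sub_zero])] at key
  have hsplit := MeasureTheory.integral_add hI1 hI2
  have hneg : (∫ x in Set.Icc aa bb, dφ (V x) * ∑ i : Fin 2, (gg V i x) ^ 2) ≤ 0 := by
    refine integral_nonpos fun x => ?_
    exact mul_nonpos_iff.2 (Or.inr ⟨hdφ_nonpos _, Finset.sum_nonneg fun i _ => sq_nonneg _⟩)
  have hIccpos : 0 ≤ ∫ x in Set.Icc aa bb, φ (V x) * lapG V x := by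
    rw [hsplit] at key; linarith
  have hext : ∫ x in Set.Icc aa bb, φ (V x) * lapG V x = ∫ x, φ (V x) * lapG V x := by
    refine setIntegral_eq_integral_of_forall_compl_eq_zero fun x hx => ?_
    have hnorm : ¬ ‖x‖ < R := by
      intro h
      refine hx (Set.mem_Icc.2 ⟨fun i => ?_, fun i => ?_⟩)
      · have h1 := norm_le_pi_norm x i
        rw [Real.norm_eq_abs] at h1
        have := abs_le.1 (h1.trans h.le)
        simpa [haa] using this.1
      · have h1 := norm_le_pi_norm x i
        rw [Real.norm_eq_abs] at h1
        have := abs_le.1 (h1.trans h.le)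
        simpa [hbb] using this.2
    rw [hφ0 x hnorm, zero_mul]
  rw [← hext]
  exact hIccpos
end step

lemma core {V : (Fin 2 → ℝ) → ℝ} (hV : ContDiff ℝ 2 V)
    (hbdd : Bornology.IsBounded {x | V x < 0}) :
    0 ≤ ∫ x in {x | V x < 0}, lapG V x := by
  set K : Set (Fin 2 → ℝ) := closure {x | V x < 0} with hK
  have hKc : IsCompact K := Metric.isCompact_of_isClosed_isBounded isClosed_closure hbdd.closure
  have hlapc := lapG_continuous hV
  have hbint : Integrable (K.indicator fun x => |lapG V x|) := by
    refine IntegrableOn.integrable_indicator ?_ measurableSet_closure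
    exact (hlapc.abs.continuousOn).integrableOn_compact hKc
  set F : ℕ → (Fin 2 → ℝ) → ℝ := fun n x => smoothTransition (-(n : ℝ) * V x) * lapG V x
    with hF
  have hFm : ∀ n, AEStronglyMeasurable (F n) volume := fun n =>
    ((Real.smoothTransition.continuous.comp
      (continuous_const.mul hV.continuous)).mul hlapc).aestronglyMeasurable
  have hFb : ∀ n, ∀ᵐ x, ‖F n x‖ ≤ K.indicator (fun x => |lapG V x|) x := by
    intro n
    refine Filter.Eventually.of_forall fun x => ?_
    by_cases hx : x ∈ K
    · rw [Set.indicator_of_mem hx, hF]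
      simp only [Real.norm_eq_abs, abs_mul]
      calc |smoothTransition (-(n:ℝ) * V x)| * |lapG V x|
          ≤ 1 * |lapG V x| := by
            refine mul_le_mul_of_nonneg_right ?_ (abs_nonneg _)
            rw [abs_of_nonneg (smoothTransition.nonneg _)]
            exact smoothTransition.le_one _
        _ = |lapG V x| := one_mul _
    · rw [Set.indicator_of_notMem hx]
      have hVx : 0 ≤ V x := by
        by_contra h
        exact hx (subset_closure (by simpa using not_le.1 h))
      have : smoothTransition (-(n:ℝ) * V x) = 0 :=
        smoothTransition.zero_of_nonpos (by nlinarith [Nat.cast_nonneg (α := ℝ) n])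
      simp only [hF, Real.norm_eq_abs, this, zero_mul, abs_zero, le_refl]
  have hlim : ∀ᵐ x, Filter.Tendsto (fun n => F n x) Filter.atTop
      (nhds (Set.indicator {x | V x < 0} (lapG V) x)) := by
    refine Filter.Eventually.of_forall fun x => ?_
    by_cases hx : V x < 0
    · rw [Set.indicator_of_mem (by simpa using hx)]
      have hpos : 0 < -V x := by linarith
      obtain ⟨N, hN⟩ := exists_nat_ge (1 / (-V x))
      refine tendsto_const_nhds.congr' ?_
      filter_upwards [Filter.eventually_ge_atTop N] with n hn
      have h1 : (1 : ℝ) ≤ (n : ℝ) * (-V x) := by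
        rw [div_le_iff₀ hpos] at hN
        have : (N : ℝ) ≤ (n : ℝ) := Nat.cast_le.2 hn
        nlinarith
      have : smoothTransition (-(n:ℝ) * V x) = 1 :=
        smoothTransition.one_of_one_le (by nlinarith)
      show lapG V x = F n x
      simp only [hF]
      rw [this, one_mul]
    · rw [Set.indicator_of_notMem (by simpa using hx)]
      have hVx : 0 ≤ V x := not_lt.1 hx
      have : ∀ n : ℕ, F n x = 0 := fun n => by
        have : smoothTransition (-(n:ℝ) * V x) = 0 :=
          smoothTransition.zero_of_nonpos (by nlinarith [Nat.cast_nonneg (α := ℝ) n])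
        simp only [hF]
        rw [this, zero_mul]
      simpa only [this] using tendsto_const_nhds
  have htend := MeasureTheory.tendsto_integral_of_dominated_convergence _ hFm hbint hFb hlim
  have hind : ∫ x, Set.indicator {x | V x < 0} (lapG V) x =
      ∫ x in {x | V x < 0}, lapG V x :=
    integral_indicator (isOpen_lt hV.continuous continuous_const).measurableSet
  rw [hind] at htend
  exact ge_of_tendsto' htend fun n => step_n hV hbdd n

noncomputable section Transfer

open EuclideanSpace

theorem fisher_information_imaginary_part_nonpos
    (W : EuclideanSpace ℝ (Fin 2) → ℝ) (hW : ContDiff ℝ 2 W)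
    (hbdd : Bornology.IsBounded {v | W v < 0})
    (hgrad : ∀ v, W v = 0 → gradient W v ≠ 0) :
    0 ≤ ∫ v in {v | W v < 0}, lap W v := by
  set L := EuclideanSpace.equiv (Fin 2) ℝ with hL
  set V : (Fin 2 → ℝ) → ℝ := W ∘ L.symm with hVdef
  have hVcd : ContDiff ℝ 2 V := hW.comp L.symm.contDiff
  have hbdd' : Bornology.IsBounded {x | V x < 0} := by
    have hset : {x | V x < 0} = ⇑L '' {v | W v < 0} := by
      rw [show ⇑L '' {v | W v < 0} = ⇑L.symm ⁻¹' {v | W v < 0} from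
        L.toEquiv.image_eq_preimage_symm _]
      rfl
    rw [hset]
    exact ((L : EuclideanSpace ℝ (Fin 2) →L[ℝ] (Fin 2 → ℝ)).lipschitz).isBounded_image hbdd
  -- identify the Laplacians
  have hgg : ∀ (i : Fin 2), gg V i =
      (fun v => fderiv ℝ W v (EuclideanSpace.single i 1)) ∘ ⇑L.symm := by
    intro i
    funext x
    show fderiv ℝ (W ∘ ⇑L.symm) x (Pi.single i 1) = _
    rw [L.symm.comp_right_fderiv]
    rfl
  have hlap : ∀ x, lapG V x = lap W (L.symm x) := by
    intro x
    unfold lapG lap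
    refine Finset.sum_congr rfl fun i _ => ?_
    rw [hgg i, L.symm.comp_right_fderiv]
    rfl
  -- transfer the integral
  have hmp := EuclideanSpace.volume_preserving_symm_measurableEquiv_toLp (Fin 2)
  have hemb := (MeasurableEquiv.toLp 2 (Fin 2 → ℝ)).symm.measurableEmbedding
  have hpre : (MeasurableEquiv.toLp 2 (Fin 2 → ℝ)).symm ⁻¹' {x | V x < 0} =
      {v | W v < 0} := rfl
  have hint := hmp.setIntegral_preimage_emb hemb (lapG V) {x | V x < 0}
  rw [hpre] at hint
  have hintg : ∫ v in {v | W v < 0}, lap W v =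
      ∫ x in {x | V x < 0}, lapG V x := by
    rw [← hint]
    refine setIntegral_congr_fun ?_ fun v _ => ?_
    · exact (isOpen_lt hW.continuous continuous_const).measurableSet
    · rw [hlap]
      rfl
  rw [hintg]
  exact core hVcd hbdd'

end Transfer
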